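/- Let $0 < \beta < \gamma < 1$ and let $C_3, C_4, C_5 > 0$. Suppose $j(x) \le a_1 x^{-1/\gamma}$ for all $x>0$ and $\psi \ge C_3 z^{\beta}(C_4 z^{\beta-1} + C_5)^{\frac{\gamma-\beta}{\beta-1}}$ where $z = N/K > 0$. Then there exists a constant $b_7 > 0$ (depending on $a_1, C_3, C_4, C_5, \beta, \gamma$) such that $j(\psi)\cdot\frac{N}{K} \le b_7 + \left(\frac{N}{K}\right)^{1-\beta}$ for all $K, N > 0$. -/

import Mathlib

open Real

lemma rpow_sub_add {x y p : ℝ} (hx : 0 ≤ x) (hy : 0 ≤ y) (hp : 0 ≤ p) (hp1 : p ≤ 1) :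
    (x + y) ^ p ≤ x ^ p + y ^ p := by
  have h := NNReal.rpow_add_le_add_rpow x.toNNReal y.toNNReal hp hp1
  have := (NNReal.coe_le_coe).2 h
  push_cast [NNReal.coe_rpow, Real.coe_toNNReal x hx, Real.coe_toNNReal y hy] at this
  simpa using this

-- M z^p ≤ M^(q/(q-p)) + z^q  for 0 < p < q, M > 0, z > 0
lemma young_aux {M p q z : ℝ} (hM : 0 < M) (hp : 0 < p) (hpq : p < q) (hz : 0 < z) :
    M * z ^ p ≤ M ^ (q / (q - p)) + z ^ q := by
  have hqp : 0 < q - p := by linarith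
  set z₀ : ℝ := M ^ (1 / (q - p)) with hz₀
  have hz₀pos : 0 < z₀ := rpow_pos_of_pos hM _
  rcases le_total z z₀ with h | h
  · have h1 : z ^ p ≤ z₀ ^ p := rpow_le_rpow hz.le h hp.le
    have h2 : M * z ^ p ≤ M * z₀ ^ p := by nlinarith [rpow_nonneg hz.le p]
    have h3 : M * z₀ ^ p = M ^ (q / (q - p)) := by
      rw [hz₀, ← rpow_mul hM.le]
      nth_rewrite 1 [← rpow_one M]
      rw [← rpow_add hM]
      congr 1
      field_simp
      ring
    calc M * z ^ p ≤ M * z₀ ^ p := h2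
      _ = M ^ (q / (q - p)) := h3
      _ ≤ M ^ (q / (q - p)) + z ^ q := le_add_of_nonneg_right (rpow_nonneg hz.le q)
  · have hM' : M ≤ z ^ (q - p) := by
      have : z₀ ^ (q - p) ≤ z ^ (q - p) := rpow_le_rpow hz₀pos.le h hqp.le
      rwa [hz₀, ← rpow_mul hM.le, one_div, inv_mul_cancel₀ hqp.ne', rpow_one] at this
    have : M * z ^ p ≤ z ^ (q - p) * z ^ p := by nlinarith [rpow_nonneg hz.le p]
    calc M * z ^ p ≤ z ^ (q - p) * z ^ p := this
      _ = z ^ q := by rw [← rpow_add hz]; ring_nf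
      _ ≤ M ^ (q / (q - p)) + z ^ q := le_add_of_nonneg_left (rpow_pos_of_pos hM _).le

theorem stmt16 (β γ a₁ C₃ C₄ C₅ : ℝ) (hβ0 : 0 < β) (hβγ : β < γ) (hγ : γ < 1)
    (ha₁ : 0 < a₁) (hC₃ : 0 < C₃) (hC₄ : 0 < C₄) (hC₅ : 0 < C₅)
    (j : ℝ → ℝ) (hj : ∀ x > (0:ℝ), j x ≤ a₁ * x ^ (-1/γ))
    (ψ : ℝ → ℝ → ℝ)
    (hψ : ∀ K > (0:ℝ), ∀ N > (0:ℝ),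
      C₃ * (N/K) ^ β * (C₄ * (N/K) ^ (β-1) + C₅) ^ ((γ-β)/(β-1)) ≤ ψ K N) :
    ∃ b₇ > 0, ∀ K > (0:ℝ), ∀ N > (0:ℝ),
      j (ψ K N) * (N/K) ≤ b₇ + (N/K) ^ (1-β) := by
  have hγ0 : 0 < γ := hβ0.trans hβγ
  set θ : ℝ := (γ - β) / (γ * (1 - β)) with hθdef
  have hθ0 : 0 < θ := by
    apply div_pos (by linarith) (by nlinarith)
  have hθ1 : θ ≤ 1 := by
    rw [div_le_one (by nlinarith)]
    nlinarith
  set p : ℝ := 1 - β / γ with hpdef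
  set q : ℝ := 1 - β with hqdef
  have hp0 : 0 < p := by
    have : β / γ < 1 := (div_lt_one hγ0).2 hβγ
    simp [hpdef]; linarith
  have hpq : p < q := by
    have : β < β / γ := by
      rw [lt_div_iff₀ hγ0]; nlinarith
    simp [hpdef, hqdef]; linarith
  set D : ℝ := a₁ * C₃ ^ (-1/γ) with hDdef
  have hD : 0 < D := by positivity
  set A : ℝ := D * C₄ ^ θ with hAdef
  set M : ℝ := D * C₅ ^ θ with hMdef
  have hA : 0 < A := by positivity
  have hM : 0 < M := by positivity
  refine ⟨A + M ^ (q / (q - p)), by positivity, ?_⟩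
  intro K hK N hN
  have hz : 0 < N / K := div_pos hN hK
  set z : ℝ := N / K with hzdef
  have hQ : 0 < C₄ * z ^ (β - 1) + C₅ := by positivity
  set Q : ℝ := C₄ * z ^ (β - 1) + C₅ with hQdef
  have hP : 0 < C₃ * z ^ β * Q ^ ((γ - β) / (β - 1)) := by positivity
  have hψP := hψ K hK N hN
  have hψ0 : 0 < ψ K N := hP.trans_le hψP
  have hneg : -1/γ ≤ 0 := by
    rw [neg_div]; exact neg_nonpos.2 (by positivity)
  have h1 : j (ψ K N) ≤ a₁ * (ψ K N) ^ (-1/γ) := hj _ hψ0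
  have h2 : (ψ K N) ^ (-1/γ) ≤ (C₃ * z ^ β * Q ^ ((γ - β) / (β - 1))) ^ (-1/γ) :=
    Real.rpow_le_rpow_of_nonpos hP hψP hneg
  have hPexp : (C₃ * z ^ β * Q ^ ((γ - β) / (β - 1))) ^ (-1/γ)
      = C₃ ^ (-1/γ) * z ^ (β * (-1/γ)) * Q ^ θ := by
    rw [Real.mul_rpow (by positivity) (by positivity),
      Real.mul_rpow hC₃.le (by positivity), ← Real.rpow_mul hz.le,
      ← Real.rpow_mul hQ.le]
    have hb1 : β - 1 ≠ 0 := by linarith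
    have h1b : (1:ℝ) - β ≠ 0 := by linarith
    have hexpQ : (γ - β) / (β - 1) * (-1/γ) = θ := by
      rw [hθdef, hqdef]; field_simp; ring
    rw [hexpQ]
  have hQθ : Q ^ θ ≤ C₄ ^ θ * z ^ ((β - 1) * θ) + C₅ ^ θ := by
    have h := rpow_sub_add (x := C₄ * z ^ (β - 1)) (y := C₅)
      (by positivity) hC₅.le hθ0.le hθ1
    rwa [Real.mul_rpow hC₄.le (by positivity), ← Real.rpow_mul hz.le] at h
  have step1 : j (ψ K N) * z ≤ a₁ * (C₃ ^ (-1/γ) * z ^ (β * (-1/γ)) * Q ^ θ) * z := by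
    have : j (ψ K N) ≤ a₁ * (C₃ ^ (-1/γ) * z ^ (β * (-1/γ)) * Q ^ θ) := by
      calc j (ψ K N) ≤ a₁ * (ψ K N) ^ (-1/γ) := h1
        _ ≤ a₁ * (C₃ * z ^ β * Q ^ ((γ - β) / (β - 1))) ^ (-1/γ) := by
            exact mul_le_mul_of_nonneg_left h2 ha₁.le
        _ = _ := by rw [hPexp]
    exact mul_le_mul_of_nonneg_right this hz.le
  have step2 : a₁ * (C₃ ^ (-1/γ) * z ^ (β * (-1/γ)) * Q ^ θ) * z
      ≤ A + M * z ^ p := by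
    have hmono : a₁ * (C₃ ^ (-1/γ) * z ^ (β * (-1/γ)) * Q ^ θ) * z
        ≤ a₁ * (C₃ ^ (-1/γ) * z ^ (β * (-1/γ)) * (C₄ ^ θ * z ^ ((β - 1) * θ) + C₅ ^ θ)) * z := by
      have hpos : (0:ℝ) ≤ a₁ * (C₃ ^ (-1/γ) * z ^ (β * (-1/γ))) * z := by positivity
      nlinarith [Real.rpow_nonneg hz.le (β * (-1/γ)), Real.rpow_pos_of_pos hC₃ (-1/γ),
        mul_le_mul_of_nonneg_left hQθ hpos]
    have heq : a₁ * (C₃ ^ (-1/γ) * z ^ (β * (-1/γ)) * (C₄ ^ θ * z ^ ((β - 1) * θ) + C₅ ^ θ)) * z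
        = A * z ^ (β * (-1/γ) + (β - 1) * θ + 1) + M * z ^ (β * (-1/γ) + 1) := by
      rw [Real.rpow_add hz, Real.rpow_add hz, Real.rpow_add hz, Real.rpow_one, hAdef, hMdef, hDdef]
      ring
    have h1b : (1:ℝ) - β ≠ 0 := by linarith
    have he1 : β * (-1/γ) + (β - 1) * θ + 1 = 0 := by
      rw [hθdef, hqdef]; field_simp; ring
    have he2 : β * (-1/γ) + 1 = p := by
      rw [hpdef]; field_simp; ring
    calc a₁ * (C₃ ^ (-1/γ) * z ^ (β * (-1/γ)) * Q ^ θ) * z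
        ≤ A * z ^ (β * (-1/γ) + (β - 1) * θ + 1) + M * z ^ (β * (-1/γ) + 1) := by
          rw [← heq]; exact hmono
      _ = A + M * z ^ p := by rw [he1, he2, Real.rpow_zero, mul_one]
  have step3 : M * z ^ p ≤ M ^ (q / (q - p)) + z ^ q := young_aux hM hp0 hpq hz
  calc j (ψ K N) * z ≤ A + M * z ^ p := step1.trans step2
    _ ≤ A + (M ^ (q / (q - p)) + z ^ q) := by linarith
    _ = A + M ^ (q / (q - p)) + z ^ q := by ring
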